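/- For s ≤ n < 2s, T(n, m, s, k) = (n − s + 1)^k · T(s, m, s, k); equivalently, T(n,m,s,k) = (n−s+1)^k · C(m − (s−1)k, k). -/

import Mathlib

/-- The set of cells covered by an `s×s` square whose corner is at `p`. -/
def squareCells (s : ℕ) (p : ℕ × ℕ) : Finset (ℕ × ℕ) :=
  Finset.Ico p.1 (p.1 + s) ×ˢ Finset.Ico p.2 (p.2 + s)

/-- `T n m s k`: the number of ways to place `k` pairwise non-overlapping axis-aligned
`s×s` squares at integer positions inside an `n×m` rectangle (the remaining cells
being covered by `1×1` squares). -/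
noncomputable def T (n m s k : ℕ) : ℕ :=
  Set.ncard {S : Finset (ℕ × ℕ) |
    S.card = k ∧
    (∀ p ∈ S, p.1 + s ≤ n ∧ p.2 + s ≤ m) ∧
    (S : Set (ℕ × ℕ)).Pairwise fun p q => Disjoint (squareCells s p) (squareCells s q)}

/-- `Ttot n m s`: total number of tilings of the `n×m` rectangle by `1×1` and `s×s`
squares (summing over all possible numbers of `s×s` squares). -/
noncomputable def Ttot (n m s : ℕ) : ℕ := ∑ k ∈ Finset.range (n * m + 1), T n m s k

/-- The defining set of `T`. -/
def Tset (n m s k : ℕ) : Set (Finset (ℕ × ℕ)) :=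
  {S : Finset (ℕ × ℕ) |
    S.card = k ∧
    (∀ p ∈ S, p.1 + s ≤ n ∧ p.2 + s ≤ m) ∧
    (S : Set (ℕ × ℕ)).Pairwise fun p q => Disjoint (squareCells s p) (squareCells s q)}

lemma T_eq (n m s k : ℕ) : T n m s k = (Tset n m s k).ncard := rfl

lemma icoOverlap {s n r1 r2 : ℕ} (hn : n < 2 * s) (h1 : r1 + s ≤ n) (h2 : r2 + s ≤ n) :
    ¬ Disjoint (Finset.Ico r1 (r1 + s)) (Finset.Ico r2 (r2 + s)) := by
  intro h
  have hm1 : max r1 r2 ∈ Finset.Ico r1 (r1 + s) := by simp only [Finset.mem_Ico]; omega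
  have hm2 : max r1 r2 ∈ Finset.Ico r2 (r2 + s) := by simp only [Finset.mem_Ico]; omega
  exact Finset.disjoint_left.mp h hm1 hm2

lemma ico_disj_iff {a b s : ℕ} :
    Disjoint (Finset.Ico a (a + s)) (Finset.Ico b (b + s)) ↔ a + s ≤ b ∨ b + s ≤ a := by
  rw [Finset.disjoint_left]
  constructor
  · intro h
    by_contra hc
    push_neg at hc
    exact h (show max a b ∈ Finset.Ico a (a + s) by simp only [Finset.mem_Ico]; omega)
      (show max a b ∈ Finset.Ico b (b + s) by simp only [Finset.mem_Ico]; omega)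
  · intro h x hx1 hx2
    simp only [Finset.mem_Ico] at hx1 hx2
    omega

lemma sq_disj_iff {s n : ℕ} (hn : n < 2 * s) {p q : ℕ × ℕ}
    (hp : p.1 + s ≤ n) (hq : q.1 + s ≤ n) :
    Disjoint (squareCells s p) (squareCells s q) ↔
      Disjoint (Finset.Ico p.2 (p.2 + s)) (Finset.Ico q.2 (q.2 + s)) := by
  constructor
  · intro h
    obtain ⟨a, ha1, ha2⟩ := Finset.not_disjoint_iff.mp (icoOverlap hn hp hq)
    rw [Finset.disjoint_left]
    intro b hb1 hb2
    have h1' : (a, b) ∈ squareCells s p := by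
      simp only [squareCells, Finset.mem_product]; exact ⟨ha1, hb1⟩
    have h2' : (a, b) ∈ squareCells s q := by
      simp only [squareCells, Finset.mem_product]; exact ⟨ha2, hb2⟩
    exact Finset.disjoint_left.mp h h1' h2'
  · intro h
    rw [Finset.disjoint_left]
    rintro ⟨a, b⟩ h1 h2
    simp only [squareCells, Finset.mem_product] at h1 h2
    exact Finset.disjoint_left.mp h h1.2 h2.2

lemma Tset_finite (n m s k : ℕ) (hs : 0 < s) : (Tset n m s k).Finite := by
  apply Set.Finite.subset (Finset.finite_toSet ((Finset.range n ×ˢ Finset.range m).powerset))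
  intro S hS
  simp only [Finset.mem_coe, Finset.mem_powerset]
  intro p hp
  have := hS.2.1 p hp
  simp only [Finset.mem_product, Finset.mem_range]
  omega

lemma T_zero (n m s : ℕ) : T n m s 0 = 1 := by
  rw [T_eq]
  have : Tset n m s 0 = {∅} := by
    ext S
    simp only [Tset, Set.mem_setOf_eq, Set.mem_singleton_iff, Finset.card_eq_zero]
    constructor
    · rintro ⟨h, -, -⟩; exact h
    · rintro rfl; simp [Set.Pairwise]
  rw [this, Set.ncard_singleton]

lemma T_small (n m s k : ℕ) (hm : m < s) : T n m s (k + 1) = 0 := by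
  rw [T_eq]
  have : Tset n m s (k + 1) = ∅ := by
    rw [Set.eq_empty_iff_forall_notMem]
    rintro S ⟨h1, h2, -⟩
    obtain ⟨p, hp⟩ := Finset.card_pos.mp (by omega : 0 < S.card)
    have := (h2 p hp).2
    omega
  rw [this, Set.ncard_empty]

lemma ncard_prod {α β : Type*} (s : Set α) (t : Set β) :
    (s ×ˢ t).ncard = s.ncard * t.ncard := by
  rw [← Nat.card_coe_set_eq, ← Nat.card_coe_set_eq, ← Nat.card_coe_set_eq,
    Nat.card_congr (Equiv.Set.prod s t), Nat.card_prod]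

lemma T_rec (n m s k : ℕ) (hs : 0 < s) (h1 : s ≤ n) (h2 : n < 2 * s) (hm : s ≤ m) :
    T n m s (k + 1) = T n (m - 1) s (k + 1) + (n - s + 1) * T n (m - s) s k := by
  classical
  set A : Set (Finset (ℕ × ℕ)) :=
    {S | S ∈ Tset n m s (k + 1) ∧ ∀ p ∈ S, p.2 ≠ m - s} with hA
  set B : Set (Finset (ℕ × ℕ)) :=
    {S | S ∈ Tset n m s (k + 1) ∧ ∃ p ∈ S, p.2 = m - s} with hB
  have hsplit : Tset n m s (k + 1) = A ∪ B := by
    ext S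
    simp only [hA, hB, Set.mem_union, Set.mem_setOf_eq]
    by_cases h : ∃ p ∈ S, p.2 = m - s
    · tauto
    · push_neg at h; tauto
  have hAeq : A = Tset n (m - 1) s (k + 1) := by
    ext S
    simp only [hA, Tset, Set.mem_setOf_eq]
    constructor
    · rintro ⟨⟨hc, hb, hpw⟩, hne⟩
      refine ⟨hc, fun p hp => ?_, hpw⟩
      have := hb p hp
      have := hne p hp
      omega
    · rintro ⟨hc, hb, hpw⟩
      refine ⟨⟨hc, fun p hp => ?_, hpw⟩, fun p hp => ?_⟩
      · have := hb p hp; omega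
      · have := hb p hp; omega
  -- B is the image of the product set
  set f : ℕ × Finset (ℕ × ℕ) → Finset (ℕ × ℕ) := fun rS => insert (rS.1, m - s) rS.2 with hf
  set P : Set (ℕ × Finset (ℕ × ℕ)) := (Set.Iio (n - s + 1)) ×ˢ Tset n (m - s) s k with hP
  have hnotmem : ∀ r (S' : Finset (ℕ × ℕ)), S' ∈ Tset n (m - s) s k → (r, m - s) ∉ S' := by
    intro r S' hS' hmem
    have := (hS'.2.1 _ hmem).2
    simp only at this
    omega
  have hBeq : B = f '' P := by
    ext S
    simp only [hB, Set.mem_setOf_eq, Set.mem_image]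
    constructor
    · rintro ⟨⟨hc, hb, hpw⟩, p₀, hp₀, hcol⟩
      refine ⟨(p₀.1, S.erase p₀), ⟨?_, ?_⟩, ?_⟩
      · have := (hb p₀ hp₀).1
        simp only [Set.mem_Iio]
        omega
      · refine ⟨by simp [Finset.card_erase_of_mem hp₀, hc], fun q hq => ?_, ?_⟩
        · have hqS := Finset.mem_of_mem_erase hq
          have hqne := Finset.ne_of_mem_erase hq
          have hbq := hb q hqS
          refine ⟨hbq.1, ?_⟩
          have hdisj : Disjoint (squareCells s q) (squareCells s p₀) :=
            hpw (Finset.mem_coe.mpr hqS) (Finset.mem_coe.mpr hp₀) hqne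
          rw [sq_disj_iff h2 hbq.1 (hb p₀ hp₀).1] at hdisj
          rw [ico_disj_iff] at hdisj
          rcases hdisj with h | h
          · omega
          · have := (hb p₀ hp₀).2; omega
        · exact hpw.mono (Finset.coe_subset.mpr (Finset.erase_subset _ _))
      · simp only [hf]
        have : (p₀.1, m - s) = p₀ := by
          rw [← hcol]
        rw [this, Finset.insert_erase hp₀]
    · rintro ⟨⟨r, S'⟩, ⟨hr, hS'⟩, rfl⟩
      obtain ⟨hc, hb, hpw⟩ := hS'
      simp only [Set.mem_Iio] at hr
      have hnm : (r, m - s) ∉ S' := hnotmem r S' ⟨hc, hb, hpw⟩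
      have hbound : ∀ p ∈ insert (r, m - s) S', p.1 + s ≤ n ∧ p.2 + s ≤ m := by
        intro p hp
        rcases Finset.mem_insert.mp hp with rfl | hp
        · exact ⟨by show r + s ≤ n; omega, by show m - s + s ≤ m; omega⟩
        · have := hb p hp; omega
      refine ⟨⟨?_, hbound, ?_⟩, (r, m - s), Finset.mem_insert_self _ _, rfl⟩
      · rw [Finset.card_insert_of_notMem hnm, hc]
      · rw [Finset.coe_insert]
        refine (haveI : Std.Symm (fun p q : ℕ × ℕ => Disjoint (squareCells s p) (squareCells s q)) := ⟨?_⟩; Set.pairwise_insert_of_symm).mpr ⟨hpw, ?_⟩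
        · intro x y h; exact h.symm
        · intro q hq hne
          obtain ⟨hbq1, hbq2⟩ := hb q hq
          rw [sq_disj_iff h2 (by show r + s ≤ n; omega) hbq1]
          rw [ico_disj_iff]
          right
          show q.2 + s ≤ m - s
          omega
  have hinj : Set.InjOn f P := by
    rintro ⟨r1, S1⟩ ⟨hr1, hS1⟩ ⟨r2, S2⟩ ⟨hr2, hS2⟩ heq
    simp only [hf] at heq
    have hn1 : (r1, m - s) ∉ S1 := hnotmem _ _ hS1
    have hn2 : (r2, m - s) ∉ S2 := hnotmem _ _ hS2
    have hmem : (r1, m - s) ∈ insert (r2, m - s) S2 := heq ▸ Finset.mem_insert_self _ _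
    rcases Finset.mem_insert.mp hmem with h | h
    · have hr : r1 = r2 := by simpa using congrArg Prod.fst h
      subst hr
      have : S1 = S2 := by
        have e1 := Finset.erase_insert hn1
        have e2 := Finset.erase_insert hn2
        rw [← e1, ← e2, heq]
      rw [this]
    · exact absurd h (hnotmem _ _ hS2)
  have hABdisj : Disjoint A B := by
    rw [Set.disjoint_left]
    rintro S ⟨-, hall⟩ ⟨-, p, hp, hcol⟩
    exact hall p hp hcol
  have hAfin : A.Finite := (Tset_finite n m s (k + 1) hs).subset (fun S hS => hS.1)
  have hBfin : B.Finite := (Tset_finite n m s (k + 1) hs).subset (fun S hS => hS.1)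
  rw [T_eq, hsplit, Set.ncard_union_eq hABdisj hAfin hBfin, hAeq, hBeq,
    Set.ncard_image_of_injOn hinj, hP, ncard_prod, ← T_eq, ← T_eq]
  congr 2
  rw [← Finset.coe_range, Set.ncard_coe_finset, Finset.card_range]

lemma T_formula (n s : ℕ) (hs : 0 < s) (h1 : s ≤ n) (h2 : n < 2 * s) :
    ∀ m k, T n m s k = (n - s + 1) ^ k * Nat.choose (m - (s - 1) * k) k := by
  intro m
  induction m using Nat.strong_induction_on with
  | _ m ih =>
    intro k
    cases k with
    | zero => simp [T_zero]
    | succ k =>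
      by_cases hm : m < s
      · rw [T_small n m s k hm]
        have : m - (s - 1) * (k + 1) < k + 1 := by
          rcases Nat.eq_or_lt_of_le hs with h | h
          · omega
          · have : (s - 1) * (k + 1) ≥ s - 1 := Nat.le_mul_of_pos_right _ (by omega)
            omega
        rw [Nat.choose_eq_zero_of_lt this, Nat.mul_zero]
      · push_neg at hm
        rw [T_rec n m s k hs h1 h2 hm, ih (m - 1) (by omega) (k + 1), ih (m - s) (by omega) k]
        have harith : (m - 1 - (s - 1) * (k + 1)) = (m - s - (s - 1) * k) := by
          have : (s - 1) * (k + 1) = (s - 1) * k + (s - 1) := by ring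
          omega
        rw [harith]
        have hkey : Nat.choose (m - (s - 1) * (k + 1)) (k + 1) =
            Nat.choose (m - s - (s - 1) * k) (k + 1) + Nat.choose (m - s - (s - 1) * k) k := by
          by_cases hle : m ≤ (s - 1) * (k + 1)
          · -- all terms with choose of small numbers
            have e1 : m - (s - 1) * (k + 1) = 0 := by omega
            have e2 : m - s - (s - 1) * k = 0 := by
              have : (s - 1) * (k + 1) = (s - 1) * k + (s - 1) := by ring
              omega
            have hk1 : 0 < k := by
              rcases Nat.eq_zero_or_pos k with rfl | h
              · simp at hle; omega
              · exact h
            rw [e1, e2, Nat.choose_eq_zero_of_lt (by omega : 0 < k + 1),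
              Nat.choose_eq_zero_of_lt hk1]
          · push_neg at hle
            have e3 : m - (s - 1) * (k + 1) = (m - s - (s - 1) * k) + 1 := by
              have : (s - 1) * (k + 1) = (s - 1) * k + (s - 1) := by ring
              omega
            rw [e3, Nat.choose_succ_succ]
            exact Nat.add_comm _ _
        rw [hkey]
        ring
  
theorem stmt_7 (n m s k : ℕ) (hs : 0 < s) (h1 : s ≤ n) (h2 : n < 2 * s)
    (hm : 0 < m) :
    T n m s k = (n - s + 1) ^ k * T s m s k ∧
    T n m s k = (n - s + 1) ^ k * Nat.choose (m - (s - 1) * k) k := by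
  have hmain := T_formula n s hs h1 h2 m k
  have hsq := T_formula s s hs le_rfl (by omega) m k
  simp only [Nat.sub_self, Nat.zero_add, Nat.one_pow, Nat.one_mul] at hsq
  exact ⟨by rw [hmain, hsq], hmain⟩
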